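/- Let G = (V, ω) be a finite weighted graph with vertex measure μ, let h, f : V → ℝ with f_i > 0 for all i, and let α ≥ p > 1. Suppose φ̂ : V → ℝ satisfies φ̂_i > 0 for all i ∈ V and I(φ̂) ≤ I(φ) for all φ ≥ 0 with φ ≢ 0 (i.e. φ̂ minimizes the energy functional). Then φ̂ satisfies the p-th Yamabe equation (Δ_p φ̂)_i + h_i φ̂_i^{p−1} = λ_{φ̂} f_i φ̂_i^{α−1} for every i ∈ V, where λ_{φ̂} = −(∫_E |∇φ̂|^p dω − ∫_V h φ̂^p dμ)/(∫_V f φ̂^α dμ). -/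

import Mathlib

/-- The gradient energy `∫_E |∇φ|^p dω = (1/2) ∑_{i,j} ω_ij |φ_j − φ_i|^p`. -/
noncomputable def gradEnergy {V : Type*} [Fintype V] (ω : V → V → ℝ) (p : ℝ)
    (φ : V → ℝ) : ℝ :=
  (1 / 2) * ∑ i, ∑ j, ω i j * |φ j - φ i| ^ p

/-- The energy functional
`I(φ) = (∫_E |∇φ|^p dω − ∫_V h φ^p dμ) (∫_V f φ^α dμ)^{−p/α}`. -/
noncomputable def energy {V : Type*} [Fintype V] (μ : V → ℝ) (ω : V → V → ℝ)
    (h f : V → ℝ) (p α : ℝ) (φ : V → ℝ) : ℝ :=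
  (gradEnergy ω p φ - ∑ i, μ i * (h i * φ i ^ p)) *
    (∑ i, μ i * (f i * φ i ^ α)) ^ (-(p / α))

/-- The discrete `p`-Laplacian on a finite weighted graph:
`(Δ_p φ)_i = (1/μ_i) ∑_j ω_ij |φ_j − φ_i|^{p−2} (φ_j − φ_i)`. -/
noncomputable def pLaplacian {V : Type*} [Fintype V] (μ : V → ℝ) (ω : V → V → ℝ)
    (p : ℝ) (φ : V → ℝ) (i : V) : ℝ :=
  (1 / μ i) * ∑ j, ω i j * |φ j - φ i| ^ (p - 2) * (φ j - φ i)

/-- A strictly positive minimizer `φ̂` of the energy functional satisfies the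
`p`-th Yamabe equation `Δ_p φ̂ + h φ̂^{p−1} = λ_{φ̂} f φ̂^{α−1}` with
`λ_{φ̂} = −(∫_E |∇φ̂|^p dω − ∫_V h φ̂^p dμ) / ∫_V f φ̂^α dμ`. -/
theorem minimizer_satisfies_yamabe_equation
    {V : Type*} [Fintype V] [Nonempty V]
    (μ : V → ℝ) (hμ : ∀ i, 0 < μ i)
    (ω : V → V → ℝ) (hωsym : ∀ i j, ω i j = ω j i)
    (hωnonneg : ∀ i j, 0 ≤ ω i j) (hωloop : ∀ i, ω i i = 0)
    (h f : V → ℝ) (hf : ∀ i, 0 < f i)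
    (p α : ℝ) (hp : 1 < p) (hpα : p ≤ α)
    (φhat : V → ℝ) (hpos : ∀ i, 0 < φhat i)
    (hmin : ∀ φ : V → ℝ, (∀ i, 0 ≤ φ i) → φ ≠ 0 →
      energy μ ω h f p α φhat ≤ energy μ ω h f p α φ)
    (lamφ : ℝ)
    (hlam : lamφ = -(gradEnergy ω p φhat - ∑ i, μ i * (h i * φhat i ^ p)) /
      (∑ i, μ i * (f i * φhat i ^ α))) :
    ∀ i, pLaplacian μ ω p φhat i + h i * φhat i ^ (p - 1) =
      lamφ * f i * φhat i ^ (α - 1) := by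
    classical
  intro i
  have hα : 1 < α := lt_of_lt_of_le hp hpα
  have hα0 : α ≠ 0 := by linarith
  have hp0 : p ≠ 0 := by linarith
  set δ : V → ℝ := fun j => if j = i then 1 else 0 with hδ
  set ψ : ℝ → V → ℝ := fun t j => φhat j + t * δ j with hψ
  have hψ0 : ψ 0 = φhat := by funext j; simp [hψ]
  have hval : ∀ j, ψ 0 j = φhat j := fun j => by simp [hψ]
  have hinner : ∀ j, HasDerivAt (fun t : ℝ => ψ t j) (δ j) 0 := by
    intro j
    exact (hasDerivAt_mul_const (δ j)).const_add (φhat j)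
  -- constants
  set B : ℝ := ∑ j, μ j * (f j * φhat j ^ α) with hBdef
  set A : ℝ := gradEnergy ω p φhat - ∑ j, μ j * (h j * φhat j ^ p) with hAdef
  set S : ℝ := ∑ j, ω i j * |φhat j - φhat i| ^ (p - 2) * (φhat j - φhat i) with hSdef
  have hBpos : 0 < B := by
    rw [hBdef]
    apply Finset.sum_pos
    · intro j _
      have h1 := hpos j; have h2 := hf j; have h3 := hμ j
      positivity
    · exact Finset.univ_nonempty
  -- derivative of F
  have hF : HasDerivAt (fun t => ∑ j, μ j * (f j * ψ t j ^ α))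
      (μ i * (f i * (α * φhat i ^ (α - 1)))) 0 := by
    have hsum := HasDerivAt.fun_sum (u := Finset.univ)
      (A := fun j t => μ j * (f j * ψ t j ^ α))
      (A' := fun j => μ j * (f j * (α * φhat j ^ (α - 1) * δ j)))
      (x := (0:ℝ)) ?_
    · convert hsum using 1
      · rfl
      · rfl
      rw [Finset.sum_eq_single i]
      · simp [hδ]
      · intro j _ hj; simp [hδ, hj]
      · simp
    · intro j _
      have houter : HasDerivAt (fun x : ℝ => x ^ α) (α * ψ 0 j ^ (α - 1)) (ψ 0 j) :=
        Real.hasDerivAt_rpow_const (Or.inl (by rw [hval j]; exact ne_of_gt (hpos j)))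
      have hcomp := (houter.comp 0 (hinner j)).const_mul (μ j * f j)
      simp only [Function.comp_def, hval j] at hcomp
      convert hcomp using 1
      · rfl
      · funext t; ring
      · ring
  -- derivative of H
  have hH : HasDerivAt (fun t => ∑ j, μ j * (h j * ψ t j ^ p))
      (μ i * (h i * (p * φhat i ^ (p - 1)))) 0 := by
    have hsum := HasDerivAt.fun_sum (u := Finset.univ)
      (A := fun j t => μ j * (h j * ψ t j ^ p))
      (A' := fun j => μ j * (h j * (p * φhat j ^ (p - 1) * δ j)))
      (x := (0:ℝ)) ?_
    · convert hsum using 1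
      · rfl
      · rfl
      rw [Finset.sum_eq_single i]
      · simp [hδ]
      · intro j _ hj; simp [hδ, hj]
      · simp
    · intro j _
      have houter : HasDerivAt (fun x : ℝ => x ^ p) (p * ψ 0 j ^ (p - 1)) (ψ 0 j) :=
        Real.hasDerivAt_rpow_const (Or.inl (by rw [hval j]; exact ne_of_gt (hpos j)))
      have hcomp := (houter.comp 0 (hinner j)).const_mul (μ j * h j)
      simp only [Function.comp_def, hval j] at hcomp
      convert hcomp using 1
      · rfl
      · funext t; ring
      · ring
  -- derivative of G
  set w : V → V → ℝ := fun k j =>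
    ω k j * (p * |φhat j - φhat k| ^ (p - 2) * (φhat j - φhat k)) with hwdef
  have hG : HasDerivAt (fun t => (1/2) * ∑ k, ∑ j, ω k j * |ψ t j - ψ t k| ^ p)
      ((1/2) * ∑ k, ∑ j, w k j * (δ j - δ k)) 0 := by
    refine HasDerivAt.const_mul _ ?_
    refine HasDerivAt.fun_sum fun k _ => ?_
    refine HasDerivAt.fun_sum fun j _ => ?_
    have hin : HasDerivAt (fun t : ℝ => ψ t j - ψ t k) (δ j - δ k) 0 :=
      (hinner j).sub (hinner k)
    have houter : HasDerivAt (fun x : ℝ => |x| ^ p)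
        (p * |ψ 0 j - ψ 0 k| ^ (p - 2) * (ψ 0 j - ψ 0 k)) (ψ 0 j - ψ 0 k) :=
      hasDerivAt_abs_rpow _ hp
    have hcomp := (houter.comp 0 hin).const_mul (ω k j)
    simp only [Function.comp_def, hval] at hcomp
    convert hcomp using 1
    · rfl
    rw [hwdef]; ring
  -- simplify the G derivative
  have hGsimp : (1/2) * (∑ k, ∑ j, w k j * (δ j - δ k)) = -(p * S) := by
    have h1 : ∀ k, (∑ j, w k j * (δ j - δ k))
        = w k i - δ k * ∑ j, w k j := by
      intro k
      have hterm : ∀ j, w k j * (δ j - δ k) = w k j * δ j - w k j * δ k := fun j => by ring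
      simp only [hterm]
      rw [Finset.sum_sub_distrib]
      congr 1
      · simp [hδ, mul_ite, mul_one, mul_zero, Finset.sum_ite_eq']
      · rw [Finset.mul_sum]; exact Finset.sum_congr rfl fun j _ => by ring
    have h2 : ∀ k, w k i = - w i k := by
      intro k
      rw [hwdef]
      simp only
      rw [hωsym k i, abs_sub_comm (φhat i) (φhat k)]
      ring
    have h3 : (∑ k, δ k * ∑ j, w k j) = ∑ j, w i j := by
      simp [hδ, ite_mul, one_mul, zero_mul, Finset.sum_ite_eq']
    have h4 : (∑ k, w k i) = - ∑ k, w i k := by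
      rw [← Finset.sum_neg_distrib]
      exact Finset.sum_congr rfl fun k _ => h2 k
    have h5 : (∑ j, w i j) = p * S := by
      rw [hSdef, Finset.mul_sum]
      exact Finset.sum_congr rfl fun j _ => by rw [hwdef]; ring
    calc (1/2) * (∑ k, ∑ j, w k j * (δ j - δ k))
        = (1/2) * ((∑ k, w k i) - ∑ k, δ k * ∑ j, w k j) := by
          rw [← Finset.sum_sub_distrib]
          congr 1
          exact Finset.sum_congr rfl fun k _ => h1 k
      _ = -(p * S) := by rw [h3, h4, h5]; ring
  rw [hGsimp] at hG
  -- derivative of the full energy along ψ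
  have hFval : (∑ j, μ j * (f j * ψ 0 j ^ α)) = B := by
    rw [hBdef]; exact Finset.sum_congr rfl fun j _ => by rw [hval j]
  have houterB : HasDerivAt (fun x : ℝ => x ^ (-(p/α)))
      ((-(p/α)) * B ^ (-(p/α) - 1)) (∑ j, μ j * (f j * ψ 0 j ^ α)) := by
    rw [hFval]
    exact Real.hasDerivAt_rpow_const (Or.inl hBpos.ne')
  have hD : HasDerivAt (fun t => (∑ j, μ j * (f j * ψ t j ^ α)) ^ (-(p/α)))
      ((-(p/α)) * B ^ (-(p/α) - 1) * (μ i * (f i * (α * φhat i ^ (α - 1))))) 0 := by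
    have := houterB.comp 0 hF
    simpa [Function.comp_def] using this
  have hN : HasDerivAt
      (fun t => (1/2) * (∑ k, ∑ j, ω k j * |ψ t j - ψ t k| ^ p)
        - ∑ j, μ j * (h j * ψ t j ^ p))
      (-(p * S) - μ i * (h i * (p * φhat i ^ (p - 1)))) 0 := hG.sub hH
  have hg : HasDerivAt (fun t => energy μ ω h f p α (ψ t))
      ((-(p * S) - μ i * (h i * (p * φhat i ^ (p - 1)))) * B ^ (-(p/α))
        + A * ((-(p/α)) * B ^ (-(p/α) - 1) * (μ i * (f i * (α * φhat i ^ (α - 1)))))) 0 := by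
    have hmul := hN.mul hD
    simp only [hval] at hmul
    exact hmul
  -- local minimum at 0
  have hlocal : IsLocalMin (fun t => energy μ ω h f p α (ψ t)) 0 := by
    have hev : ∀ᶠ t in nhds (0:ℝ), |t| < φhat i := by
      have := eventually_abs_sub_lt (0:ℝ) (hpos i)
      simpa using this
    filter_upwards [hev] with t ht
    have hab := abs_lt.1 ht
    have hti : ψ t i = φhat i + t := by simp [hψ, hδ]
    have h1 : ∀ j, 0 ≤ ψ t j := by
      intro j
      by_cases hj : j = i
      · subst hj; rw [hti]; linarith [hab.1]
      · simp only [hψ, hδ, if_neg hj, mul_zero, add_zero]; exact (hpos j).le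
    have h2 : ψ t ≠ 0 := by
      intro hc
      have hci := congrFun hc i
      rw [hti] at hci
      simp only [Pi.zero_apply] at hci
      linarith [hab.1]
    have := hmin (ψ t) h1 h2
    simpa [hψ0] using this
  have hzero := hlocal.hasDerivAt_eq_zero hg
  -- final algebra
  have hCpos : 0 < B ^ (-(p/α)) := Real.rpow_pos_of_pos hBpos _
  have hsplit : B ^ (-(p/α) - 1) = B ^ (-(p/α)) / B := by
    rw [Real.rpow_sub hBpos, Real.rpow_one]
  rw [hsplit] at hzero
  have hbr : (-(p * S) - μ i * (h i * (p * φhat i ^ (p - 1))))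
      + A * ((-(p/α)) * (1/B) * (μ i * (f i * (α * φhat i ^ (α - 1))))) = 0 := by
    have hfac : ((-(p * S) - μ i * (h i * (p * φhat i ^ (p - 1))))
        + A * ((-(p/α)) * (1/B) * (μ i * (f i * (α * φhat i ^ (α - 1))))))
        * B ^ (-(p/α)) = 0 := by
      rw [← hzero]; field_simp
    exact (mul_eq_zero.1 hfac).resolve_right hCpos.ne'
  -- conclude
  rw [pLaplacian, hlam, ← hSdef]
  have hμi := (hμ i).ne'
  field_simp at hbr ⊢
  have hbr2 : (S + h i * φhat i ^ (p - 1) * μ i) * B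
      + A * f i * φhat i ^ (α - 1) * μ i = 0 :=
    mul_left_cancel₀ (mul_ne_zero hp0 hα0)
      (b := (S + h i * φhat i ^ (p - 1) * μ i) * B + A * f i * φhat i ^ (α - 1) * μ i)
      (c := 0) (by linear_combination -α * hbr)
  linear_combination hbr2
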